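/- Let d ≥ 1, k ≥ 1, α ∈ [0,1), and let Z be a set. Suppose ℓ : EuclideanSpace ℝ (Fin d) → Z → ℝ is such that for every z ∈ Z the map w ↦ ℓ(w, z) is convex, and let w⁰ ∈ EuclideanSpace ℝ (Fin d). For S = (z₁, …, z_k) ∈ Z^k define f_S(w) = (1/k) ∑_{j=1}^k ℓ(w, z_j) + (1−α)‖w − w⁰‖², and let S^i be S with z_i replaced by z_i'. If w_S is a global minimizer of f_S and w_{S^i} is a global minimizer of f_{S^i}, then (1−α)·‖w_{S^i} − w_S‖² ≤ (ℓ(w_{S^i}, z_i) − ℓ(w_S, z_i))/k + (ℓ(w_S, z_i') − ℓ(w_{S^i}, z_i'))/k. -/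

import Mathlib

theorem stmt3 (d k : ℕ) (hd : 1 ≤ d) (hk : 1 ≤ k) (α : ℝ)
    (hα0 : 0 ≤ α) (hα1 : α < 1)
    (Z : Type*) (ℓ : EuclideanSpace ℝ (Fin d) → Z → ℝ)
    (hconv : ∀ z : Z, ConvexOn ℝ Set.univ (fun w => ℓ w z))
    (w0 : EuclideanSpace ℝ (Fin d))
    (S : Fin k → Z) (i : Fin k) (z' : Z)
    (f : (Fin k → Z) → EuclideanSpace ℝ (Fin d) → ℝ)
    (hf : ∀ (T : Fin k → Z) (w : EuclideanSpace ℝ (Fin d)),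
      f T w = (1 / (k : ℝ)) * ∑ j, ℓ w (T j) + (1 - α) * ‖w - w0‖ ^ 2)
    (wS wSi : EuclideanSpace ℝ (Fin d))
    (hwS : ∀ w, f S wS ≤ f S w)
    (hwSi : ∀ w, f (Function.update S i z') wSi ≤ f (Function.update S i z') w) :
    (1 - α) * ‖wSi - wS‖ ^ 2 ≤
      (ℓ wSi (S i) - ℓ wS (S i)) / k + (ℓ wS z' - ℓ wSi z') / k := by
  have hk0 : (0:ℝ) < k := by exact_mod_cast hk
  set m : EuclideanSpace ℝ (Fin d) := (1/2 : ℝ) • wS + (1/2 : ℝ) • wSi with hm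
  -- norm identity at midpoint
  have hnorm : ‖m - w0‖ ^ 2
      = ‖wS - w0‖ ^ 2 / 2 + ‖wSi - w0‖ ^ 2 / 2 - ‖wSi - wS‖ ^ 2 / 4 := by
    have hmu : m - w0 = (1/2 : ℝ) • ((wS - w0) + (wSi - w0)) := by
      rw [hm]; module
    have h1 : ‖(wS - w0) + (wSi - w0)‖ ^ 2
        = ‖wS - w0‖ ^ 2 + 2 * inner ℝ (wS - w0) (wSi - w0) + ‖wSi - w0‖ ^ 2 :=
      norm_add_sq_real _ _
    have h2 : ‖(wSi - w0) - (wS - w0)‖ ^ 2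
        = ‖wSi - w0‖ ^ 2 - 2 * inner ℝ (wSi - w0) (wS - w0) + ‖wS - w0‖ ^ 2 :=
      norm_sub_sq_real _ _
    have h3 : (wSi - w0) - (wS - w0) = wSi - wS := by abel
    have h4 : (inner ℝ (wS - w0) (wSi - w0) : ℝ) = inner ℝ (wSi - w0) (wS - w0) :=
      real_inner_comm _ _
    rw [hmu, norm_smul]
    rw [h3] at h2
    simp only [Real.norm_eq_abs]
    rw [abs_of_pos (by norm_num : (0:ℝ) < 1/2)]
    nlinarith [h1, h2, h4]
  -- convexity of the sum part
  have hsum : ∀ T : Fin k → Z, ∑ j, ℓ m (T j)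
      ≤ (1/2) * ∑ j, ℓ wS (T j) + (1/2) * ∑ j, ℓ wSi (T j) := by
    intro T
    calc ∑ j, ℓ m (T j) ≤ ∑ j, ((1/2) * ℓ wS (T j) + (1/2) * ℓ wSi (T j)) := by
          apply Finset.sum_le_sum
          intro j _
          have := (hconv (T j)).2 (Set.mem_univ wS) (Set.mem_univ wSi)
            (by norm_num : (0:ℝ) ≤ 1/2) (by norm_num : (0:ℝ) ≤ 1/2) (by norm_num)
          simpa [hm, smul_eq_mul] using this
      _ = (1/2) * ∑ j, ℓ wS (T j) + (1/2) * ∑ j, ℓ wSi (T j) := by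
          rw [Finset.sum_add_distrib, ← Finset.mul_sum, ← Finset.mul_sum]
  -- midpoint bound for f T
  have hfm : ∀ T : Fin k → Z,
      f T m ≤ (f T wS + f T wSi) / 2 - (1 - α) * ‖wSi - wS‖ ^ 2 / 4 := by
    intro T
    rw [hf, hf, hf, hnorm]
    have := mul_le_mul_of_nonneg_left (hsum T) (by positivity : (0:ℝ) ≤ 1 / k)
    nlinarith [this]
  have key : (1 - α) * ‖wSi - wS‖ ^ 2
      ≤ (f S wSi - f S wS) + (f (Function.update S i z') wS - f (Function.update S i z') wSi) := by
    have h1 := hwS m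
    have h2 := hwSi m
    have h3 := hfm S
    have h4 := hfm (Function.update S i z')
    linarith
  -- sums over updated dataset
  have hupd : ∀ w : EuclideanSpace ℝ (Fin d),
      ∑ j, ℓ w (Function.update S i z' j) = ∑ j, ℓ w (S j) + ℓ w z' - ℓ w (S i) := by
    intro w
    have he : ∀ j, ℓ w (Function.update S i z' j)
        = Function.update (fun j => ℓ w (S j)) i (ℓ w z') j := by
      intro j
      by_cases h : j = i
      · subst h; simp
      · simp [Function.update_of_ne h]
    rw [Finset.sum_congr rfl (fun j _ => he j),
      Finset.sum_update_of_mem (Finset.mem_univ i)]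
    have := Finset.sum_erase_add Finset.univ (fun j => ℓ w (S j)) (Finset.mem_univ i)
    rw [Finset.sdiff_singleton_eq_erase]
    linarith
  rw [hf, hf, hf, hf, hupd, hupd] at key
  refine key.trans_eq ?_
  ring
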